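/- In the 3-uel with distinct marksmanships p1, p2, p3 ∈ (0,1), player P1's payoff V_{1,1111} as a function of his mixed strategy (x12, x13) with x12, x13 ≥ 0 and x12 + x13 = 1 is maximized at x12 = 1 if p2 > p3 and at x13 = 1 if p3 > p2; i.e., the unique best response at state 1111 is to shoot the strongest opponent. -/
import Mathlib


/-- In the 3-uel with distinct marksmanships, P1's payoff `V_{1,1111}` as a function of
his mixed strategy `(x12, x13)` (probabilities of shooting P2 and P3, with the other
players' contributions `A2, A3` not depending on P1's choice) is uniquely maximized at
`x12 = 1` if `p2 > p3` and at `x13 = 1` if `p3 > p2`: the unique best response is to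
shoot the strongest opponent. -/
theorem truel_shoot_strongest_opponent (p1 p2 p3 A2 A3 : ℝ)
    (hp1 : p1 ∈ Set.Ioo (0:ℝ) 1) (hp2 : p2 ∈ Set.Ioo (0:ℝ) 1)
    (hp3 : p3 ∈ Set.Ioo (0:ℝ) 1)
    (h12 : p1 ≠ p2) (h23 : p2 ≠ p3) (h13 : p1 ≠ p3) :
    let V : ℝ → ℝ → ℝ := fun x12 x13 =>
      (p1 * (x12 * (p1 * (1 - p3) / (p1 + p3 - p1 * p3)) +
             x13 * (p1 * (1 - p2) / (p1 + p2 - p1 * p2)))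
        + (1 - p1) * A2 + (1 - p1) * (1 - p2) * A3)
        / (1 - (1 - p1) * (1 - p2) * (1 - p3))
    (p2 > p3 → ∀ x12 x13 : ℝ, 0 ≤ x12 → 0 ≤ x13 → x12 + x13 = 1 → x12 ≠ 1 →
        V x12 x13 < V 1 0) ∧
    (p3 > p2 → ∀ x12 x13 : ℝ, 0 ≤ x12 → 0 ≤ x13 → x12 + x13 = 1 → x13 ≠ 1 →
        V x12 x13 < V 0 1) := by
  obtain ⟨hp10, hp11⟩ := hp1
  obtain ⟨hp20, hp21⟩ := hp2
  obtain ⟨hp30, hp31⟩ := hp3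
  intro V
  have hd2 : 0 < p1 + p2 - p1 * p2 := by nlinarith
  have hd3 : 0 < p1 + p3 - p1 * p3 := by nlinarith
  have hD : 0 < 1 - (1 - p1) * (1 - p2) * (1 - p3) := by nlinarith
  constructor
  · intro h x12 x13 hx12 hx13 hsum hne
    have hx13pos : 0 < x13 := lt_of_le_of_ne hx13 (fun h0 => hne (by linarith))
    have hc : p1 * (1 - p2) / (p1 + p2 - p1 * p2)
        < p1 * (1 - p3) / (p1 + p3 - p1 * p3) := by
      rw [div_lt_div_iff₀ hd2 hd3]; nlinarith
    show _ / _ < _ / _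
    rw [div_lt_div_iff_of_pos_right hD]
    set c12 := p1 * (1 - p3) / (p1 + p3 - p1 * p3)
    set c13 := p1 * (1 - p2) / (p1 + p2 - p1 * p2)
    have hx : x12 = 1 - x13 := by linarith
    subst hx
    nlinarith [mul_pos hp10 (mul_pos hx13pos (sub_pos.mpr hc))]
  · intro h x12 x13 hx12 hx13 hsum hne
    have hx12pos : 0 < x12 := lt_of_le_of_ne hx12 (fun h0 => hne (by linarith))
    have hc : p1 * (1 - p3) / (p1 + p3 - p1 * p3)
        < p1 * (1 - p2) / (p1 + p2 - p1 * p2) := by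
      rw [div_lt_div_iff₀ hd3 hd2]; nlinarith
    show _ / _ < _ / _
    rw [div_lt_div_iff_of_pos_right hD]
    set c12 := p1 * (1 - p3) / (p1 + p3 - p1 * p3)
    set c13 := p1 * (1 - p2) / (p1 + p2 - p1 * p2)
    have hx : x13 = 1 - x12 := by linarith
    subst hx
    nlinarith [mul_pos hp10 (mul_pos hx12pos (sub_pos.mpr hc))]
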